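/- Let G be a finite simple loopless graph and ℓ ≥ 2. Define the ℓ-link graph L_ℓ(G) as the simple graph whose vertices are the ℓ-links of G (non-backtracking walks of length ℓ identified with their reverses), two ℓ-links being adjacent when they are the initial and terminal length-ℓ subwalks of a common non-backtracking walk of length ℓ+1. Then the map sending each ℓ-link to its middle (ℓ−2)-link (the subwalk from position 1 to position ℓ−1) is a graph homomorphism from L_ℓ(G) to L_{ℓ−2}(G). Consequently χ(L_ℓ(G)) ≤ χ(L_{ℓ−2}(G)). -/

import Mathlib

/-- A non-backtracking walk of length `ℓ` in a simple graph, encoded by its vertex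
sequence: consecutive vertices adjacent, vertices two apart distinct. -/
def IsNBWalk {V : Type*} (G : SimpleGraph V) (ℓ : ℕ) (w : Fin (ℓ + 1) → V) : Prop :=
  (∀ i j : Fin (ℓ + 1), (i : ℕ) + 1 = (j : ℕ) → G.Adj (w i) (w j)) ∧
  (∀ i j : Fin (ℓ + 1), (i : ℕ) + 2 = (j : ℕ) → w i ≠ w j)

/-- The reverse of a walk. -/
def revWalk {V : Type*} {ℓ : ℕ} (w : Fin (ℓ + 1) → V) : Fin (ℓ + 1) → V :=
  fun i => w i.rev

/-- An `ℓ`-link of `G`: a non-backtracking walk identified with its reverse, encoded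
as the two-element set `{w, revWalk w}`. -/
def Link {V : Type*} (G : SimpleGraph V) (ℓ : ℕ) : Type _ :=
  {S : Set (Fin (ℓ + 1) → V) // ∃ w, IsNBWalk G ℓ w ∧ S = {w, revWalk w}}

/-- Initial length-`ℓ` subwalk of a walk of length `ℓ+1`. -/
def initWalk {V : Type*} {ℓ : ℕ} (q : Fin (ℓ + 2) → V) : Fin (ℓ + 1) → V :=
  fun i => q i.castSucc

/-- Terminal length-`ℓ` subwalk of a walk of length `ℓ+1`. -/
def tailWalk {V : Type*} {ℓ : ℕ} (q : Fin (ℓ + 2) → V) : Fin (ℓ + 1) → V :=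
  fun i => q i.succ

/-- The `ℓ`-link graph of `G`: two `ℓ`-links are adjacent when they are the initial
and terminal length-`ℓ` subwalks of a common non-backtracking walk of length `ℓ+1`. -/
def LinkGraph {V : Type*} (G : SimpleGraph V) (ℓ : ℕ) : SimpleGraph (Link G ℓ) where
  Adj L R := L ≠ R ∧ ∃ q : Fin (ℓ + 2) → V, IsNBWalk G (ℓ + 1) q ∧
      ((L.1 = {initWalk q, revWalk (initWalk q)} ∧
          R.1 = {tailWalk q, revWalk (tailWalk q)}) ∨
       (R.1 = {initWalk q, revWalk (initWalk q)} ∧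
          L.1 = {tailWalk q, revWalk (tailWalk q)}))
  symm := ⟨by
    rintro L R ⟨hne, q, hq, h⟩
    exact ⟨hne.symm, q, hq, h.symm⟩⟩
  loopless := ⟨fun L h => h.1 rfl⟩

/-- The middle subwalk (positions `1` to `ℓ-1`) of a walk of length `ℓ = k+2`. -/
def midWalk {V : Type*} {k : ℕ} (w : Fin (k + 3) → V) : Fin (k + 1) → V :=
  fun i => w ⟨(i : ℕ) + 1, by omega⟩

lemma midWalk_isNB {V : Type*} {G : SimpleGraph V} {k : ℕ} {w : Fin (k + 3) → V}
    (h : IsNBWalk G (k + 2) w) : IsNBWalk G k (midWalk w) := by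
  constructor
  · intro i j hij
    exact h.1 ⟨(i : ℕ) + 1, by omega⟩ ⟨(j : ℕ) + 1, by omega⟩ (by simp; omega)
  · intro i j hij
    exact h.2 ⟨(i : ℕ) + 1, by omega⟩ ⟨(j : ℕ) + 1, by omega⟩ (by simp; omega)

/-- The map sending a `(k+2)`-link to its middle `k`-link. -/
noncomputable def midLink {V : Type*} (G : SimpleGraph V) (k : ℕ)
    (L : Link G (k + 2)) : Link G k :=
  ⟨{midWalk (Classical.choose L.2), revWalk (midWalk (Classical.choose L.2))},
   ⟨midWalk (Classical.choose L.2),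
    midWalk_isNB (Classical.choose_spec L.2).1, rfl⟩⟩

lemma revWalk_revWalk {V : Type*} {ℓ : ℕ} (w : Fin (ℓ + 1) → V) :
    revWalk (revWalk w) = w := by
  funext i; simp [revWalk, Fin.rev_rev]

lemma midWalk_revWalk {V : Type*} {k : ℕ} (w : Fin (k + 3) → V) :
    midWalk (revWalk w) = revWalk (midWalk w) := by
  funext i
  simp only [midWalk, revWalk]
  congr 1
  ext
  simp [Fin.val_rev]
  omega

lemma pair_eq_of_set {V : Type*} {ℓ : ℕ} {w u : Fin (ℓ + 1) → V}
    (h : ({w, revWalk w} : Set _) = {u, revWalk u}) :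
    w = u ∨ w = revWalk u := by
  have : w ∈ ({u, revWalk u} : Set _) := h ▸ (by simp : w ∈ ({w, revWalk w} : Set _))
  simpa using this

lemma midSet_eq {V : Type*} {k : ℕ} {w u : Fin (k + 3) → V}
    (h : ({w, revWalk w} : Set _) = {u, revWalk u}) :
    ({midWalk w, revWalk (midWalk w)} : Set _) = {midWalk u, revWalk (midWalk u)} := by
  rcases pair_eq_of_set h with h | h
  · rw [h]
  · rw [h, midWalk_revWalk, revWalk_revWalk, Set.pair_comm]

lemma midLink_val {V : Type*} {G : SimpleGraph V} {k : ℕ} (L : Link G (k + 2))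
    {u : Fin (k + 3) → V} (h : L.1 = {u, revWalk u}) :
    (midLink G k L).1 = {midWalk u, revWalk (midWalk u)} := by
  have hs := (Classical.choose_spec L.2).2
  exact midSet_eq (hs.symm.trans h)

lemma mid_init_eq {V : Type*} {k : ℕ} (q : Fin (k + 4) → V) (i : Fin (k + 1)) :
    midWalk (initWalk q) i = q ⟨(i : ℕ) + 1, by omega⟩ := rfl

lemma mid_tail_eq {V : Type*} {k : ℕ} (q : Fin (k + 4) → V) (i : Fin (k + 1)) :
    midWalk (tailWalk q) i = q ⟨(i : ℕ) + 2, by omega⟩ := rfl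

lemma mid_ne {V : Type*} {G : SimpleGraph V} {k : ℕ} {q : Fin (k + 4) → V}
    (hq : IsNBWalk G (k + 3) q) :
    midWalk (initWalk q) ≠ midWalk (tailWalk q) ∧
    midWalk (initWalk q) ≠ revWalk (midWalk (tailWalk q)) := by
  constructor
  · intro h
    have h0 := congrFun h 0
    rw [mid_init_eq, mid_tail_eq] at h0
    exact (hq.1 ⟨1, by omega⟩ ⟨2, by omega⟩ rfl).ne (by simpa using h0)
  · intro h
    have h0 := congrFun h ⟨k / 2, by omega⟩
    rw [mid_init_eq] at h0
    have hrev : revWalk (midWalk (tailWalk q)) ⟨k / 2, by omega⟩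
        = q ⟨k - k / 2 + 2, by omega⟩ := by
      simp only [revWalk]
      rw [mid_tail_eq]
      congr 1
      ext
      simp [Fin.val_rev]
    rw [hrev] at h0
    rcases Nat.even_or_odd k with he | ho
    · have he' := Nat.even_iff.mp he
      apply (hq.1 ⟨k / 2 + 1, by omega⟩ ⟨k / 2 + 2, by omega⟩ rfl).ne
      exact h0.trans (congrArg q (Fin.mk_eq_mk.mpr (by omega)))
    · have ho' := Nat.odd_iff.mp ho
      apply hq.2 ⟨k / 2 + 1, by omega⟩ ⟨k / 2 + 3, by omega⟩ rfl
      exact h0.trans (congrArg q (Fin.mk_eq_mk.mpr (by omega)))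

lemma key_adj {V : Type*} {G : SimpleGraph V} {k : ℕ} (L R : Link G (k + 2))
    {q : Fin (k + 4) → V} (hq : IsNBWalk G (k + 3) q)
    (hL : L.1 = {initWalk q, revWalk (initWalk q)})
    (hR : R.1 = {tailWalk q, revWalk (tailWalk q)}) :
    (LinkGraph G k).Adj (midLink G k L) (midLink G k R) := by
  have mL := midLink_val L hL
  have mR := midLink_val R hR
  have hne := mid_ne hq
  refine ⟨?_, fun i => q ⟨(i : ℕ) + 1, by omega⟩, ?_, Or.inl ⟨?_, ?_⟩⟩
  · intro h
    have : (midLink G k L).1 = (midLink G k R).1 := by rw [h]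
    rw [mL, mR] at this
    rcases pair_eq_of_set this with h' | h'
    · exact hne.1 h'
    · exact hne.2 h'
  · constructor
    · intro i j hij
      exact hq.1 ⟨(i : ℕ) + 1, by omega⟩ ⟨(j : ℕ) + 1, by omega⟩ (by simp; omega)
    · intro i j hij
      exact hq.2 ⟨(i : ℕ) + 1, by omega⟩ ⟨(j : ℕ) + 1, by omega⟩ (by simp; omega)
  · rw [mL]
    have : initWalk (fun i : Fin (k+2) => q ⟨(i : ℕ) + 1, by omega⟩) = midWalk (initWalk q) := by
      funext i
      rfl
    rw [this]
  · rw [mR]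
    have : tailWalk (fun i : Fin (k+2) => q ⟨(i : ℕ) + 1, by omega⟩) = midWalk (tailWalk q) := by
      funext i
      rfl
    rw [this]

/-- For `ℓ = k + 2 ≥ 2`, the map sending each `ℓ`-link to its middle
`(ℓ-2)`-link is a graph homomorphism `L_ℓ(G) → L_{ℓ-2}(G)`; consequently
`χ(L_ℓ(G)) ≤ χ(L_{ℓ-2}(G))`. -/
theorem stmt_16 {V : Type*} (G : SimpleGraph V) (k : ℕ) :
    (∀ L R : Link G (k + 2), (LinkGraph G (k + 2)).Adj L R →
      (LinkGraph G k).Adj (midLink G k L) (midLink G k R)) ∧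
    (LinkGraph G (k + 2)).chromaticNumber ≤ (LinkGraph G k).chromaticNumber := by
  have hom : ∀ L R : Link G (k + 2), (LinkGraph G (k + 2)).Adj L R →
      (LinkGraph G k).Adj (midLink G k L) (midLink G k R) := by
    rintro L R ⟨hne, q, hq, hLR | hLR⟩
    · exact key_adj L R hq hLR.1 hLR.2
    · exact (key_adj R L hq hLR.1 hLR.2).symm
  refine ⟨hom, ?_⟩
  rw [SimpleGraph.chromaticNumber_eq_biInf (G := LinkGraph G k)]
  refine le_iInf₂ fun n hn => ?_
  refine SimpleGraph.Colorable.chromaticNumber_le ?_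
  obtain ⟨C⟩ := hn
  exact ⟨SimpleGraph.Coloring.mk (fun L => C (midLink G k L))
    (fun h => C.valid (hom _ _ h))⟩
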